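/- arXiv:2104.02053 — 3 statements merged into one kernel-verified Lean document; each statement's English description precedes it below -/
import Mathlib

section
/- Let ρ and σ be density matrices on ℂ^D and T = ‖ρ − σ‖₁ / 2 their trace distance, so 0 ≤ T ≤ 1. Then |S(ρ) − S(σ)| ≤ T ln(D−1) − T ln T − (1−T) ln(1−T), where S denotes the von Neumann entropy and the binary-entropy terms are interpreted as 0 when T ∈ {0,1}. -/
open Real Finset

lemma negMulLog_sum_le {ι : Type*} (s : Finset ι) (f : ι → ℝ) (hf : ∀ i ∈ s, 0 ≤ f i) :
    negMulLog (∑ i ∈ s, f i) ≤ ∑ i ∈ s, negMulLog (f i) := by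
  have h : negMulLog (∑ i ∈ s, f i) = ∑ i ∈ s, (- f i * Real.log (∑ j ∈ s, f j)) := by
    rw [negMulLog]
    rw [show -(∑ i ∈ s, f i) * log (∑ i ∈ s, f i) = (∑ i ∈ s, f i) * (-log (∑ i ∈ s, f i)) by ring]
    rw [Finset.sum_mul]
    exact Finset.sum_congr rfl (fun i _ => by ring)
  rw [h]
  apply Finset.sum_le_sum
  intro i hi
  rcases eq_or_lt_of_le (hf i hi) with h0 | h0
  · simp [negMulLog, ← h0]
  · rw [negMulLog, neg_mul, neg_mul, neg_le_neg_iff]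
    have : f i ≤ ∑ j ∈ s, f j := Finset.single_le_sum hf hi
    exact mul_le_mul_of_nonneg_left (Real.log_le_log h0 this) (le_of_lt h0)

lemma sum_negMulLog_le {ι : Type*} (s : Finset ι) (f : ι → ℝ) (hf : ∀ i ∈ s, 0 ≤ f i) :
    ∑ i ∈ s, negMulLog (f i) ≤ negMulLog (∑ i ∈ s, f i) + (∑ i ∈ s, f i) * Real.log s.card := by
  rcases s.eq_empty_or_nonempty with rfl | hne
  · simp [negMulLog]
  have hk : (0:ℝ) < s.card := by exact_mod_cast Finset.card_pos.mpr hne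
  have hjensen : ∑ i ∈ s, (s.card:ℝ)⁻¹ • negMulLog (f i) ≤
      negMulLog (∑ i ∈ s, (s.card:ℝ)⁻¹ • f i) := by
    apply concaveOn_negMulLog.le_map_sum (fun i _ => by positivity)
      (by simp [Finset.sum_const]; field_simp) (fun i hi => hf i hi)
  have h2 : ∑ i ∈ s, (s.card:ℝ)⁻¹ • f i = (∑ i ∈ s, f i) * (s.card:ℝ)⁻¹ := by
    rw [← Finset.smul_sum]; simp [mul_comm]
  rw [h2] at hjensen
  have h3 : negMulLog ((∑ i ∈ s, f i) * (s.card:ℝ)⁻¹)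
      = (s.card:ℝ)⁻¹ * negMulLog (∑ i ∈ s, f i)
        + (∑ i ∈ s, f i) * ((s.card:ℝ)⁻¹ * Real.log s.card) := by
    rw [negMulLog_mul]
    congr 1
    rw [negMulLog, Real.log_inv]
    ring
  rw [h3] at hjensen
  have h4 : ∑ i ∈ s, (s.card:ℝ)⁻¹ • negMulLog (f i)
      = (s.card:ℝ)⁻¹ * ∑ i ∈ s, negMulLog (f i) := by
    rw [← Finset.smul_sum]; simp
  rw [h4] at hjensen
  have := mul_le_mul_of_nonneg_left hjensen (le_of_lt hk)
  calc ∑ i ∈ s, negMulLog (f i)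
      = (s.card:ℝ) * ((s.card:ℝ)⁻¹ * ∑ i ∈ s, negMulLog (f i)) := by
        rw [← mul_assoc, mul_inv_cancel₀ (ne_of_gt hk), one_mul]
    _ ≤ (s.card:ℝ) * ((s.card:ℝ)⁻¹ * negMulLog (∑ i ∈ s, f i)
        + (∑ i ∈ s, f i) * ((s.card:ℝ)⁻¹ * Real.log s.card)) := this
    _ = negMulLog (∑ i ∈ s, f i) + (∑ i ∈ s, f i) * Real.log s.card := by
        field_simp

/-- binary entropy -/
noncomputable def bent (x : ℝ) : ℝ := negMulLog x + negMulLog (1 - x)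

lemma grouping {ι : Type*} [Fintype ι] (u : ι → ℝ) (hu : ∀ i, 0 ≤ u i)
    (hsum : ∑ i, u i = 1) (j₀ : ι) :
    ∑ i, negMulLog (u i) ≤ negMulLog (u j₀) + negMulLog (1 - u j₀)
      + (1 - u j₀) * Real.log ((Fintype.card ι : ℝ) - 1) := by
  classical
  have hcard : 1 ≤ Fintype.card ι := Fintype.card_pos_iff.mpr ⟨j₀⟩
  have hsplit : ∑ i ∈ Finset.univ.erase j₀, u i = 1 - u j₀ := by
    have := Finset.sum_erase_add Finset.univ u (Finset.mem_univ j₀)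
    rw [hsum] at this; linarith
  have h1 : ∑ i, negMulLog (u i)
      = (∑ i ∈ Finset.univ.erase j₀, negMulLog (u i)) + negMulLog (u j₀) :=
    (Finset.sum_erase_add Finset.univ _ (Finset.mem_univ j₀)).symm
  have h2 := sum_negMulLog_le (Finset.univ.erase j₀) u (fun i _ => hu i)
  rw [hsplit] at h2
  have hc : ((Finset.univ.erase j₀).card : ℝ) = (Fintype.card ι : ℝ) - 1 := by
    rw [Finset.card_erase_of_mem (Finset.mem_univ j₀), Finset.card_univ]
    have : (1:ℕ) ≤ Fintype.card ι := hcard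
    push_cast [Nat.cast_sub this]
    ring
  rw [hc] at h2
  rw [h1]
  linarith

lemma concaveOn_bent : ConcaveOn ℝ (Set.Icc (0:ℝ) 1) bent := by
  have c1 : ConcaveOn ℝ (Set.Icc (0:ℝ) 1) negMulLog :=
    concaveOn_negMulLog.subset (fun x hx => hx.1) (convex_Icc 0 1)
  have c2 : ConcaveOn ℝ (Set.Icc (0:ℝ) 1) (fun x => negMulLog (1 - x)) := by
    refine ⟨convex_Icc 0 1, fun x hx y hy a b ha hb hab => ?_⟩
    have hx' : (1:ℝ) - x ∈ Set.Icc (0:ℝ) 1 := ⟨by linarith [hx.2], by linarith [hx.1]⟩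
    have hy' : (1:ℝ) - y ∈ Set.Icc (0:ℝ) 1 := ⟨by linarith [hy.2], by linarith [hy.1]⟩
    have := c1.2 hx' hy' ha hb hab
    have harg : a • ((1:ℝ) - x) + b • (1 - y) = 1 - (a • x + b • y) := by
      simp only [smul_eq_mul]; nlinarith
    rw [harg] at this
    exact this
  exact c1.add c2

lemma bent_jensen {ι : Type*} [Fintype ι] (q e : ι → ℝ) (hq : ∀ i, 0 ≤ q i)
    (hq1 : ∑ i, q i = 1) (he : ∀ i, e i ∈ Set.Icc (0:ℝ) 1) :
    ∑ i, q i * bent (e i) ≤ bent (∑ i, q i * e i) := by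
  have := concaveOn_bent.le_map_sum (t := Finset.univ) (w := q) (p := e)
    (fun i _ => hq i) hq1 (fun i _ => he i)
  simpa [smul_eq_mul] using this

/-- column lemma: un-normalized entropy bound for a column with total mass `s`. -/
lemma column_bound {ι : Type*} [Fintype ι] (v : ι → ℝ) (hv : ∀ i, 0 ≤ v i) (j₀ : ι)
    (s : ℝ) (hs : s = ∑ i, v i) (hspos : 0 < s) :
    ∑ i, negMulLog (v i) ≤ negMulLog s + s * bent (1 - v j₀ / s)
      + s * (1 - v j₀ / s) * Real.log ((Fintype.card ι : ℝ) - 1) := by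
  set u : ι → ℝ := fun i => v i / s with hu
  have hu0 : ∀ i, 0 ≤ u i := fun i => div_nonneg (hv i) hspos.le
  have hu1 : ∑ i, u i = 1 := by
    rw [hu]
    simp only []
    rw [← Finset.sum_div, ← hs, div_self (ne_of_gt hspos)]
  have hgl := grouping u hu0 hu1 j₀
  have hexp : ∀ i, negMulLog (v i) = u i * negMulLog s + s * negMulLog (u i) := by
    intro i
    have : v i = s * u i := by simp only [hu]; field_simp
    rw [this, negMulLog_mul]
  have hsum : ∑ i, negMulLog (v i) = negMulLog s + s * ∑ i, negMulLog (u i) := by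
    simp only [hexp]
    rw [Finset.sum_add_distrib, ← Finset.sum_mul, hu1, one_mul, Finset.mul_sum]
  rw [hsum]
  have : s * ∑ i, negMulLog (u i) ≤ s * (negMulLog (u j₀) + negMulLog (1 - u j₀)
      + (1 - u j₀) * Real.log ((Fintype.card ι : ℝ) - 1)) :=
    mul_le_mul_of_nonneg_left hgl hspos.le
  have huj : u j₀ = v j₀ / s := rfl
  rw [bent, show (1 : ℝ) - (1 - v j₀ / s) = v j₀ / s by ring]
  rw [huj] at this
  nlinarith [this]

theorem classical_fannes_one {D : ℕ} (p q : Fin D → ℝ) (hp0 : ∀ i, 0 ≤ p i)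
    (hq0 : ∀ i, 0 ≤ q i) (hp1 : ∑ i, p i = 1) (hq1 : ∑ i, q i = 1)
    (t : ℝ) (ht : t = (∑ i, |p i - q i|) / 2) :
    ∑ i, negMulLog (p i) - ∑ i, negMulLog (q i)
      ≤ t * Real.log ((D:ℝ) - 1) + bent t := by
  classical
  set r : Fin D → ℝ := fun i => min (p i) (q i) with hr
  set a : Fin D → ℝ := fun i => p i - r i with ha
  set b : Fin D → ℝ := fun i => q i - r i with hb
  have ha0 : ∀ i, 0 ≤ a i := fun i => by simp [ha, hr, min_le_left]
  have hb0 : ∀ i, 0 ≤ b i := fun i => by simp [hb, hr, min_le_right]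
  have hab0 : ∀ i, a i * b i = 0 := by
    intro i
    rcases le_total (p i) (q i) with h | h
    · have : a i = 0 := by simp [ha, hr, min_eq_left h]
      rw [this, zero_mul]
    · have : b i = 0 := by simp [hb, hr, min_eq_right h]
      rw [this, mul_zero]
  have habs : ∀ i, a i + b i = |p i - q i| := by
    intro i
    rcases le_total (p i) (q i) with h | h
    · rw [abs_of_nonpos (by linarith : p i - q i ≤ 0)]
      simp only [ha, hb, hr, min_eq_left h]
      ring
    · rw [abs_of_nonneg (by linarith : 0 ≤ p i - q i)]
      simp only [ha, hb, hr, min_eq_right h]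
      ring
  have hsum_ab : ∑ i, a i = ∑ i, b i := by
    have : ∑ i, (a i - b i) = 0 := by
      have : ∀ i, a i - b i = p i - q i := fun i => by simp only [ha, hb]; ring
      simp only [this, Finset.sum_sub_distrib, hp1, hq1, sub_self]
    rw [Finset.sum_sub_distrib] at this
    linarith
  have hta : ∑ i, a i = t := by
    have h2 : ∑ i, (a i + b i) = 2 * t := by
      simp only [habs]
      rw [ht]; ring
    rw [Finset.sum_add_distrib, ← hsum_ab] at h2
    linarith
  have ht0 : 0 ≤ t := by
    rw [← hta]
    exact Finset.sum_nonneg fun i _ => ha0 i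
  rcases eq_or_lt_of_le ht0 with ht0' | htpos
  · -- t = 0 : p = q
    have hpq : ∀ i, p i = q i := by
      intro i
      have hz : ∑ i, |p i - q i| = 0 := by rw [ht] at ht0'; linarith
      have := (Finset.sum_eq_zero_iff_of_nonneg
        (fun i _ => abs_nonneg (p i - q i))).mp hz i (Finset.mem_univ i)
      have := abs_eq_zero.mp this
      linarith
    have : ∑ i, negMulLog (p i) = ∑ i, negMulLog (q i) :=
      Finset.sum_congr rfl fun i _ => by rw [hpq i]
    rw [this, ← ht0']
    simp [bent, negMulLog]
  -- t > 0
  set L := Real.log ((D:ℝ) - 1) with hL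
  set w : Fin D → Fin D → ℝ :=
    fun i j => (if i = j then r i else 0) + a i * b j / t with hw
  have hw0 : ∀ i j, 0 ≤ w i j := by
    intro i j
    have hri : 0 ≤ r i := le_min (hp0 i) (hq0 i)
    have h1 : (0:ℝ) ≤ if i = j then r i else 0 := by
      split_ifs
      · exact hri
      · exact le_rfl
    have h2 : 0 ≤ a i * b j / t := div_nonneg (mul_nonneg (ha0 i) (hb0 j)) htpos.le
    simp only [hw]; linarith
  have hrow : ∀ i, ∑ j, w i j = p i := by
    intro i
    simp only [hw]
    rw [Finset.sum_add_distrib, Finset.sum_ite_eq Finset.univ i (fun _ => r i)]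
    simp only [Finset.mem_univ, if_true]
    have : ∑ j, a i * b j / t = a i := by
      rw [← Finset.sum_div, ← Finset.mul_sum, ← hsum_ab, hta]
      field_simp
    rw [this]
    simp [ha]
  have hcol : ∀ j, ∑ i, w i j = q j := by
    intro j
    simp only [hw]
    rw [Finset.sum_add_distrib, Finset.sum_ite_eq' Finset.univ j (fun i => r i)]
    simp only [Finset.mem_univ, if_true]
    have : ∑ i, a i * b j / t = b j := by
      rw [← Finset.sum_div, ← Finset.sum_mul, hta]
      field_simp
    rw [this]
    simp [hb]
  set e : Fin D → ℝ := fun j => if q j = 0 then 0 else b j / q j with he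
  have hbq : ∀ j, b j ≤ q j := by
    intro j
    have : 0 ≤ r j := le_min (hp0 j) (hq0 j)
    simp [hb]; linarith
  have he01 : ∀ j, e j ∈ Set.Icc (0:ℝ) 1 := by
    intro j
    by_cases hqj : q j = 0
    · simp [he, hqj]
    · have hq : 0 < q j := lt_of_le_of_ne (hq0 j) (Ne.symm hqj)
      constructor
      · simp only [he, if_neg hqj]
        exact div_nonneg (hb0 j) hq.le
      · simp only [he, if_neg hqj]
        rw [div_le_one hq]
        exact hbq j
  have hqe : ∀ j, q j * e j = b j := by
    intro j
    by_cases hqj : q j = 0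
    · have : b j = 0 := le_antisymm (by rw [← hqj] at *; exact hbq j) (hb0 j)
      simp [he, hqj, this]
    · simp only [he, if_neg hqj]
      field_simp
  have step1 : ∑ i, negMulLog (p i) ≤ ∑ i, ∑ j, negMulLog (w i j) := by
    apply Finset.sum_le_sum
    intro i _
    rw [← hrow i]
    exact negMulLog_sum_le Finset.univ _ (fun j _ => hw0 i j)
  have step2 : ∀ j, ∑ i, negMulLog (w i j)
      ≤ negMulLog (q j) + q j * bent (e j) + q j * e j * L := by
    intro j
    by_cases hqj : q j = 0
    · have hwz : ∀ i, w i j = 0 := by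
        intro i
        have hs := hcol j
        rw [hqj] at hs
        exact le_antisymm (hs ▸ Finset.single_le_sum (fun k _ => hw0 k j)
          (Finset.mem_univ i)) (hw0 i j)
      simp [hwz, hqj, negMulLog, he]
    · have hq : 0 < q j := lt_of_le_of_ne (hq0 j) (Ne.symm hqj)
      have hcb := column_bound (fun i => w i j) (fun i => hw0 i j) j (q j)
        (hcol j).symm hq
      have hwjj : w j j = r j := by
        simp only [hw, eq_self_iff_true, if_true]
        rw [div_eq_zero_iff.mpr (Or.inl (hab0 j))]
        ring
      have hej : 1 - w j j / q j = e j := by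
        rw [hwjj]
        simp only [he, if_neg hqj, hb]
        field_simp
      rw [hej] at hcb
      have hcard : ((Fintype.card (Fin D) : ℝ) - 1) = (D:ℝ) - 1 := by simp
      rw [hcard, ← hL] at hcb
      have hqee : q j * (e j) * L = q j * e j * L := rfl
      simpa using hcb
  have step3 : ∑ j, q j * e j = t := by
    simp only [hqe]
    rw [← hsum_ab, hta]
  have step4 : ∑ j, q j * bent (e j) ≤ bent t := by
    have := bent_jensen q e hq0 hq1 he01
    rw [step3] at this
    exact this
  calc ∑ i, negMulLog (p i) - ∑ i, negMulLog (q i)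
      ≤ (∑ i, ∑ j, negMulLog (w i j)) - ∑ j, negMulLog (q j) := by linarith [step1]
    _ = (∑ j, ∑ i, negMulLog (w i j)) - ∑ j, negMulLog (q j) := by
        rw [Finset.sum_comm]
    _ ≤ (∑ j, (negMulLog (q j) + q j * bent (e j) + q j * e j * L))
        - ∑ j, negMulLog (q j) := by
        have := Finset.sum_le_sum (fun j (_ : j ∈ Finset.univ) => step2 j)
        linarith [this]
    _ = (∑ j, q j * bent (e j)) + (∑ j, q j * e j) * L := by
        rw [Finset.sum_add_distrib, Finset.sum_add_distrib, Finset.sum_mul]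
        ring
    _ ≤ bent t + t * L := by
        rw [step3]
        linarith [step4]
    _ = t * L + bent t := by ring

theorem classical_fannes {D : ℕ} (p q : Fin D → ℝ) (hp0 : ∀ i, 0 ≤ p i)
    (hq0 : ∀ i, 0 ≤ q i) (hp1 : ∑ i, p i = 1) (hq1 : ∑ i, q i = 1)
    (t : ℝ) (ht : t = (∑ i, |p i - q i|) / 2) :
    |∑ i, negMulLog (p i) - ∑ i, negMulLog (q i)|
      ≤ t * Real.log ((D:ℝ) - 1) + bent t := by
  rw [abs_sub_le_iff]
  constructor
  · exact classical_fannes_one p q hp0 hq0 hp1 hq1 t ht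
  · apply classical_fannes_one q p hq0 hp0 hq1 hp1 t
    rw [ht]
    congr 1
    exact Finset.sum_congr rfl fun i _ => abs_sub_comm _ _



lemma bent_nonneg {x : ℝ} (h0 : 0 ≤ x) (h1 : x ≤ 1) : 0 ≤ bent x :=
  add_nonneg (negMulLog_nonneg h0 h1) (negMulLog_nonneg (by linarith) (by linarith))

lemma hasDerivAt_bent {t : ℝ} (ht0 : 0 < t) (ht1 : t < 1) :
    HasDerivAt bent (Real.log (1 - t) - Real.log t) t := by
  have h1 : HasDerivAt (fun s : ℝ => s * Real.log s) (Real.log t + 1) t :=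
    Real.hasDerivAt_mul_log (ne_of_gt ht0)
  have h2 : HasDerivAt (fun s : ℝ => (1 - s)) (-1 : ℝ) t := by
    exact (hasDerivAt_id' t).const_sub 1
  have h3 : HasDerivAt (fun s : ℝ => (1 - s) * Real.log (1 - s))
      ((Real.log (1 - t) + 1) * (-1)) t :=
    (Real.hasDerivAt_mul_log (by linarith : (1:ℝ) - t ≠ 0)).comp t h2
  have h4 := (h1.neg).add (h3.neg)
  have : bent = fun s : ℝ => -(s * Real.log s) + -((1 - s) * Real.log (1 - s)) := by
    funext s
    simp [bent, negMulLog]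
    ring
  rw [this]
  exact h4.congr_deriv (by ring)

lemma gmono {D : ℕ} (hD : 1 ≤ D) {x y : ℝ} (hx : 0 ≤ x) (hxy : x ≤ y)
    (hy : y ≤ 1 - 1 / D) :
    x * Real.log ((D:ℝ) - 1) + bent x ≤ y * Real.log ((D:ℝ) - 1) + bent y := by
  rcases eq_or_lt_of_le hxy with rfl | hlt
  · exact le_refl _
  have hDpos : (0:ℝ) < D := by exact_mod_cast hD
  have hD2 : 2 ≤ D := by
    by_contra h
    push_neg at h
    interval_cases D
    · simp at hy; linarith
  have hD2' : (2:ℝ) ≤ D := by exact_mod_cast hD2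
  have hL0 : 0 ≤ Real.log ((D:ℝ) - 1) := Real.log_nonneg (by linarith)
  have hy1 : y < 1 := by
    have : 0 < 1 / (D:ℝ) := by positivity
    linarith
  rcases eq_or_lt_of_le hx with rfl | hxpos
  · -- x = 0
    have : bent 0 = 0 := by simp [bent, negMulLog]
    rw [this]
    have hbel : 0 ≤ bent y := bent_nonneg (by linarith) (by linarith)
    nlinarith
  -- 0 < x < y
  set g : ℝ → ℝ := fun t => t * Real.log ((D:ℝ) - 1) + bent t with hg
  have hder : ∀ t ∈ Set.Ioo x y, HasDerivAt g
      (1 * Real.log ((D:ℝ) - 1) + (Real.log (1 - t) - Real.log t)) t := by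
    intro t ht
    exact (((hasDerivAt_id t).mul_const _)).add
      (hasDerivAt_bent (by linarith [ht.1]) (by linarith [ht.2]))
  have hcont : ContinuousOn g (Set.Icc x y) := by
    intro t ht
    have h1 : 0 < t := lt_of_lt_of_le hxpos ht.1
    have h2 : t < 1 := lt_of_le_of_lt ht.2 hy1
    exact (((hasDerivAt_id t).mul_const _).add
      (hasDerivAt_bent h1 h2)).continuousAt.continuousWithinAt
  have hmono : MonotoneOn g (Set.Icc x y) := by
    apply monotoneOn_of_deriv_nonneg (convex_Icc x y) hcont
    · intro t ht
      rw [interior_Icc] at ht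
      exact (hder t ht).differentiableAt.differentiableWithinAt
    · intro t ht
      rw [interior_Icc] at ht
      rw [(hder t ht).deriv]
      have ht0 : 0 < t := lt_of_lt_of_le hxpos ht.1.le
      have ht1 : t < 1 - 1/D := lt_of_lt_of_le ht.2 hy
      have key : t ≤ ((D:ℝ) - 1) * (1 - t) := by
        have h1 : 1/(D:ℝ) ≤ 1 - t := by linarith
        have := mul_le_mul_of_nonneg_left h1 (by linarith : (0:ℝ) ≤ (D:ℝ) - 1)
        have h2 : ((D:ℝ) - 1) * (1/D) = 1 - 1/D := by field_simp
        nlinarith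
      have hlog : Real.log t ≤ Real.log ((D:ℝ) - 1) + Real.log (1 - t) := by
        rw [← Real.log_mul (by linarith) (by intro h; nlinarith)]
        exact Real.log_le_log ht0 key
      linarith
  exact hmono (Set.left_mem_Icc.mpr hxy) (Set.right_mem_Icc.mpr hxy) hxy

lemma fmono {D : ℕ} (hD : 2 ≤ D) {m x : ℝ} (hm : 0 ≤ m) (hmx : m ≤ x)
    (hx : x ≤ 1 / D) :
    bent m + (1 - m) * Real.log ((D:ℝ) - 1) ≤ bent x + (1 - x) * Real.log ((D:ℝ) - 1) := by
  have hD' : (2:ℝ) ≤ (D:ℝ) := by exact_mod_cast hD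
  have hDpos : (0:ℝ) < D := by linarith
  have hx1 : x ≤ 1/2 := le_trans hx (by rw [div_le_div_iff₀ hDpos two_pos]; linarith)
  rcases eq_or_lt_of_le hmx with rfl | hlt
  · exact le_refl _
  rcases eq_or_lt_of_le hm with rfl | hmpos
  · -- m = 0
    have hb0 : bent 0 = 0 := by simp [bent, negMulLog]
    rw [hb0]
    have key : x * Real.log ((D:ℝ) - 1) ≤ bent x := by
      rcases eq_or_lt_of_le (le_of_lt hlt) with rfl | hxpos
      · simp [bent, negMulLog]
      · have hxD : (D:ℝ) ≤ 1 / x := by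
          rw [le_div_iff₀ hxpos]
          have h' := mul_le_mul_of_nonneg_right hx (le_of_lt hDpos)
          rw [one_div, inv_mul_cancel₀ (ne_of_gt hDpos)] at h'
          linarith
        have hlogs : Real.log ((D:ℝ) - 1) ≤ Real.log (1 / x) :=
          Real.log_le_log (by linarith) (by linarith)
        have h1 : x * Real.log ((D:ℝ) - 1) ≤ negMulLog x := by
          have hnm : negMulLog x = x * Real.log (1 / x) := by
            rw [negMulLog, one_div, Real.log_inv]; ring
          rw [hnm]
          exact mul_le_mul_of_nonneg_left hlogs hxpos.le
        have h2 : 0 ≤ negMulLog (1 - x) := negMulLog_nonneg (by linarith) (by linarith)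
        simp only [bent]
        linarith
    nlinarith [key]
  -- 0 < m < x
  set f : ℝ → ℝ := fun t => bent t + (1 - t) * Real.log ((D:ℝ) - 1) with hf
  have hlin : ∀ t : ℝ, HasDerivAt (fun s : ℝ => (1 - s) * Real.log ((D:ℝ) - 1))
      (-Real.log ((D:ℝ) - 1)) t := by
    intro t
    have h := ((hasDerivAt_const t (1:ℝ)).sub (hasDerivAt_id t)).mul_const
      (Real.log ((D:ℝ) - 1))
    simpa using h
  have hder : ∀ t ∈ Set.Ioo m x, HasDerivAt f
      ((Real.log (1 - t) - Real.log t) + -Real.log ((D:ℝ) - 1)) t := by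
    intro t ht
    exact (hasDerivAt_bent (by linarith [ht.1]) (by linarith [ht.2])).add (hlin t)
  have hcont : ContinuousOn f (Set.Icc m x) := by
    intro t ht
    have h1 : 0 < t := lt_of_lt_of_le hmpos ht.1
    have h2 : t < 1 := by linarith [ht.2]
    exact ((hasDerivAt_bent h1 h2).add (hlin t)).continuousAt.continuousWithinAt
  have hmono : MonotoneOn f (Set.Icc m x) := by
    apply monotoneOn_of_deriv_nonneg (convex_Icc m x) hcont
    · intro t ht
      rw [interior_Icc] at ht
      exact (hder t ht).differentiableAt.differentiableWithinAt
    · intro t ht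
      rw [interior_Icc] at ht
      rw [(hder t ht).deriv]
      have ht0 : 0 < t := lt_of_lt_of_le hmpos ht.1.le
      have htD : t < 1/D := lt_of_lt_of_le ht.2 hx
      have htD1 : t * (D:ℝ) < 1 := (lt_div_iff₀ hDpos).mp htD
      have key : t * ((D:ℝ) - 1) ≤ 1 - t := by nlinarith
      have hlog : Real.log t + Real.log ((D:ℝ) - 1) ≤ Real.log (1 - t) := by
        rw [← Real.log_mul (ne_of_gt ht0) (by linarith)]
        apply Real.log_le_log (mul_pos ht0 (by linarith)) key
      linarith
  exact hmono (Set.left_mem_Icc.mpr hmx) (Set.right_mem_Icc.mpr hmx) hmx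


open scoped ComplexOrder
open Matrix Finset

variable {D : ℕ}

lemma trace_unitary_conj (U : Matrix.unitaryGroup (Fin D) ℂ)
    (M : Matrix (Fin D) (Fin D) ℂ) :
    ((U : Matrix (Fin D) (Fin D) ℂ) * M * star (U : Matrix (Fin D) (Fin D) ℂ)).trace
      = M.trace := by
  rw [Matrix.trace_mul_cycle, Matrix.UnitaryGroup.star_mul_self U, Matrix.one_mul]

lemma sum_eigenvalues_eq_trace {A : Matrix (Fin D) (Fin D) ℂ} (hA : A.IsHermitian) :
    (∑ i, (hA.eigenvalues i : ℂ)) = A.trace := by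
  conv_rhs => rw [hA.spectral_theorem, Unitary.conjStarAlgAut_apply]
  rw [trace_unitary_conj hA.eigenvectorUnitary, Matrix.trace_diagonal]
  simp

/-- quadratic form in the eigenbasis -/
lemma qf_eigen_expand {A : Matrix (Fin D) (Fin D) ℂ} (hA : A.IsHermitian)
    (x : Fin D → ℂ) :
    dotProduct (star x) (A *ᵥ x)
      = ∑ i, (hA.eigenvalues i : ℂ)
          * ((Complex.normSq ((star (hA.eigenvectorUnitary : Matrix (Fin D) (Fin D) ℂ) *ᵥ x) i) : ℝ) : ℂ) := by
  set V : Matrix (Fin D) (Fin D) ℂ := (hA.eigenvectorUnitary : Matrix (Fin D) (Fin D) ℂ) with hV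
  set y : Fin D → ℂ := star V *ᵥ x with hy
  have key : dotProduct (star x) (A *ᵥ x) = dotProduct (star y) ((Matrix.diagonal
      (RCLike.ofReal ∘ hA.eigenvalues) : Matrix (Fin D) (Fin D) ℂ) *ᵥ y) := by
    conv_lhs => rw [hA.spectral_theorem, Unitary.conjStarAlgAut_apply]
    rw [← hV]
    rw [← Matrix.mulVec_mulVec, ← Matrix.mulVec_mulVec]
    rw [dotProduct_mulVec (star x) V]
    congr 1
    rw [hy, Matrix.star_mulVec, Matrix.star_eq_conjTranspose,
      Matrix.conjTranspose_conjTranspose]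
  rw [key]
  rw [dotProduct]
  apply Finset.sum_congr rfl
  intro i _
  rw [Matrix.mulVec_diagonal]
  have : (star y) i = (starRingEnd ℂ) (y i) := rfl
  rw [this]
  have hns : (starRingEnd ℂ) (y i) * y i = (Complex.normSq (y i) : ℂ) := by
    rw [mul_comm, Complex.mul_conj]
  calc (starRingEnd ℂ) (y i) * ((RCLike.ofReal ∘ hA.eigenvalues) i * y i)
      = (hA.eigenvalues i : ℂ) * ((starRingEnd ℂ) (y i) * y i) := by
        simp [Function.comp]
        ring
    _ = (hA.eigenvalues i : ℂ) * (Complex.normSq (y i) : ℂ) := by rw [hns]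

lemma norm_eigen_expand {A : Matrix (Fin D) (Fin D) ℂ} (hA : A.IsHermitian)
    (x : Fin D → ℂ) :
    dotProduct (star x) x
      = ∑ i, ((Complex.normSq ((star (hA.eigenvectorUnitary : Matrix (Fin D) (Fin D) ℂ) *ᵥ x) i) : ℝ) : ℂ) := by
  set V : Matrix (Fin D) (Fin D) ℂ := (hA.eigenvectorUnitary : Matrix (Fin D) (Fin D) ℂ) with hV
  set y : Fin D → ℂ := star V *ᵥ x with hy
  have key : dotProduct (star x) x = dotProduct (star y) y := by
    rw [hy, Matrix.star_mulVec, Matrix.star_eq_conjTranspose,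
      Matrix.conjTranspose_conjTranspose, ← dotProduct_mulVec,
      Matrix.mulVec_mulVec, ← Matrix.star_eq_conjTranspose,
      (Matrix.mem_unitaryGroup_iff).mp hA.eigenvectorUnitary.2, Matrix.one_mulVec]
  rw [key, dotProduct]
  apply Finset.sum_congr rfl
  intro i _
  have : (star y) i = (starRingEnd ℂ) (y i) := rfl
  rw [this, mul_comm, Complex.mul_conj]

lemma qf_expand_real {A : Matrix (Fin D) (Fin D) ℂ} (hA : A.IsHermitian) (x : Fin D → ℂ) :
    dotProduct (star x) (A *ᵥ x)
      = ((∑ i, hA.eigenvalues i * Complex.normSq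
          ((star (hA.eigenvectorUnitary : Matrix (Fin D) (Fin D) ℂ) *ᵥ x) i) : ℝ) : ℂ) := by
  rw [qf_eigen_expand hA x]
  push_cast
  rfl

lemma norm_expand_real {A : Matrix (Fin D) (Fin D) ℂ} (hA : A.IsHermitian) (x : Fin D → ℂ) :
    dotProduct (star x) x
      = ((∑ i, Complex.normSq
          ((star (hA.eigenvectorUnitary : Matrix (Fin D) (Fin D) ℂ) *ᵥ x) i) : ℝ) : ℂ) := by
  rw [norm_eigen_expand hA x]
  push_cast
  rfl

lemma dot_self_eq_normSq (x : Fin D → ℂ) :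
    dotProduct (star x) x = ((∑ i, Complex.normSq (x i) : ℝ) : ℂ) := by
  rw [dotProduct]
  push_cast
  apply Finset.sum_congr rfl
  intro i _
  have : (star x) i = (starRingEnd ℂ) (x i) := rfl
  rw [this, mul_comm, Complex.mul_conj]

theorem weyl_mono {A B : Matrix (Fin D) (Fin D) ℂ} (hA : A.IsHermitian)
    (hB : B.IsHermitian) (hpsd : (B - A).PosSemidef) (i : Fin D) :
    hA.eigenvalues (Tuple.sort hA.eigenvalues i) ≤ hB.eigenvalues (Tuple.sort hB.eigenvalues i) := by
  classical
  set a := hA.eigenvalues with hadef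
  set b := hB.eigenvalues with hbdef
  set sA := Tuple.sort a with hsA
  set sB := Tuple.sort b with hsB
  set VA : Matrix (Fin D) (Fin D) ℂ := (hA.eigenvectorUnitary : Matrix (Fin D) (Fin D) ℂ) with hVA
  set VB : Matrix (Fin D) (Fin D) ℂ := (hB.eigenvectorUnitary : Matrix (Fin D) (Fin D) ℂ) with hVB
  set g : {j : Fin D // j ≠ i} → (Fin D → ℂ) := fun j =>
    if (j : Fin D) < i then star (fun k => VA k (sA (j : Fin D)))
    else star (fun k => VB k (sB (j : Fin D))) with hg
  -- the linear map given by the rows g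
  set φ : (Fin D → ℂ) →ₗ[ℂ] ({j : Fin D // j ≠ i} → ℂ) :=
    { toFun := fun x => fun j => dotProduct (g j) x
      map_add' := fun x y => by
        funext j
        simp [dotProduct_add]
      map_smul' := fun c x => by
        funext j
        simp [dotProduct_smul] } with hφ
  have hker : LinearMap.ker φ ≠ ⊥ := by
    intro hbot
    have hinj : Function.Injective φ := LinearMap.ker_eq_bot.mp hbot
    have hle := LinearMap.finrank_le_finrank_of_injective hinj
    rw [Module.finrank_pi, Module.finrank_pi] at hle
    have hcard : Fintype.card {j : Fin D // j ≠ i} = D - 1 := by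
      simp [Fintype.card_subtype_compl]
    rw [hcard, Fintype.card_fin] at hle
    have hD : 0 < D := i.pos
    omega
  obtain ⟨x, hxmem, hx0⟩ := Submodule.ne_bot_iff _ |>.mp hker
  have hxker : ∀ j : {j : Fin D // j ≠ i}, dotProduct (g j) x = 0 := by
    intro j
    have := LinearMap.mem_ker.mp hxmem
    exact congr_fun this j
  set yA : Fin D → ℂ := star VA *ᵥ x with hyA
  set yB : Fin D → ℂ := star VB *ᵥ x with hyB
  have hyAval : ∀ j : Fin D, j ≠ i → j < i → yA (sA j) = 0 := by
    intro j hj hji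
    have := hxker ⟨j, hj⟩
    rw [hg] at this
    simp only [if_pos hji] at this
    rw [← this, hyA]
    simp [Matrix.mulVec, dotProduct]
  have hyBval : ∀ j : Fin D, j ≠ i → ¬(j < i) → yB (sB j) = 0 := by
    intro j hj hji
    have := hxker ⟨j, hj⟩
    rw [hg] at this
    simp only [if_neg hji] at this
    rw [← this, hyB]
    simp [Matrix.mulVec, dotProduct]
  set N : ℝ := ∑ k, Complex.normSq (x k) with hN
  have hNpos : 0 < N := by
    rw [hN]
    obtain ⟨k, hk⟩ := Function.ne_iff.mp hx0
    apply Finset.sum_pos' (fun k _ => Complex.normSq_nonneg _)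
    exact ⟨k, Finset.mem_univ k, Complex.normSq_pos.mpr hk⟩
  have hNA : ∑ k, Complex.normSq (yA k) = N := by
    have h1 := norm_expand_real hA x
    have h2 := dot_self_eq_normSq x
    rw [h1] at h2
    exact_mod_cast h2
  have hNB : ∑ k, Complex.normSq (yB k) = N := by
    have h1 := norm_expand_real hB x
    have h2 := dot_self_eq_normSq x
    rw [h1] at h2
    exact_mod_cast h2
  -- middle inequality
  have hmid : ∑ k, a k * Complex.normSq (yA k) ≤ ∑ k, b k * Complex.normSq (yB k) := by
    have hp := hpsd.dotProduct_mulVec_nonneg x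
    rw [Matrix.sub_mulVec, dotProduct_sub, qf_expand_real hA x, qf_expand_real hB x] at hp
    rw [← Complex.ofReal_sub] at hp
    rw [Complex.zero_le_real] at hp
    linarith
  -- lower bound
  have hlow : a (sA i) * N ≤ ∑ k, a k * Complex.normSq (yA k) := by
    have hre : ∑ k, a k * Complex.normSq (yA k) = ∑ j, a (sA j) * Complex.normSq (yA (sA j)) :=
      (Equiv.sum_comp sA (fun k => a k * Complex.normSq (yA k))).symm
    have hre2 : N = ∑ j, Complex.normSq (yA (sA j)) := by
      rw [← hNA]
      exact (Equiv.sum_comp sA (fun k => Complex.normSq (yA k))).symm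
    rw [hre, hre2, Finset.mul_sum]
    apply Finset.sum_le_sum
    intro j _
    by_cases hji : j < i
    · have : yA (sA j) = 0 := hyAval j (ne_of_lt hji) hji
      rw [this]
      simp
    · push_neg at hji
      have := Tuple.monotone_sort a hji
      exact mul_le_mul_of_nonneg_right this (Complex.normSq_nonneg _)
  -- upper bound
  have hup : ∑ k, b k * Complex.normSq (yB k) ≤ b (sB i) * N := by
    have hre : ∑ k, b k * Complex.normSq (yB k) = ∑ j, b (sB j) * Complex.normSq (yB (sB j)) :=
      (Equiv.sum_comp sB (fun k => b k * Complex.normSq (yB k))).symm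
    have hre2 : N = ∑ j, Complex.normSq (yB (sB j)) := by
      rw [← hNB]
      exact (Equiv.sum_comp sB (fun k => Complex.normSq (yB k))).symm
    rw [hre, hre2, Finset.mul_sum]
    apply Finset.sum_le_sum
    intro j _
    by_cases hji : i < j
    · have : yB (sB j) = 0 := hyBval j (ne_of_gt hji) (not_lt_of_gt hji)
      rw [this]
      simp
    · push_neg at hji
      have := Tuple.monotone_sort b hji
      exact mul_le_mul_of_nonneg_right this (Complex.normSq_nonneg _)
  have := le_trans hlow (le_trans hmid hup)
  exact le_of_mul_le_mul_right (by linarith) hNpos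

lemma sum_eigenvalues_real {A : Matrix (Fin D) (Fin D) ℂ} (hA : A.IsHermitian) :
    ∑ i, hA.eigenvalues i = A.trace.re := by
  have := congrArg Complex.re (sum_eigenvalues_eq_trace hA)
  simpa using this

lemma exists_posPart {C : Matrix (Fin D) (Fin D) ℂ} (hC : C.IsHermitian) :
    ∃ P : Matrix (Fin D) (Fin D) ℂ, P.PosSemidef ∧ (P - C).PosSemidef ∧
      P.trace = ((∑ i, max (hC.eigenvalues i) 0 : ℝ) : ℂ) := by
  classical
  set V : Matrix (Fin D) (Fin D) ℂ := (hC.eigenvectorUnitary : Matrix (Fin D) (Fin D) ℂ) with hV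
  set d : Fin D → ℂ := fun i => ((max (hC.eigenvalues i) 0 : ℝ) : ℂ) with hd
  refine ⟨V * Matrix.diagonal d * star V, ?_, ?_, ?_⟩
  · have hdiag : (Matrix.diagonal d).PosSemidef := by
      apply Matrix.PosSemidef.diagonal
      intro i
      rw [hd]
      exact Complex.zero_le_real.mpr (le_max_right _ _)
    have := hdiag.mul_mul_conjTranspose_same V
    rwa [← Matrix.star_eq_conjTranspose] at this
  · have hsub : V * Matrix.diagonal d * star V - C
        = V * Matrix.diagonal (fun i => d i - ((hC.eigenvalues i : ℝ) : ℂ)) * star V := by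
      conv_lhs => rw [hC.spectral_theorem, Unitary.conjStarAlgAut_apply]
      rw [← hV]
      have : Matrix.diagonal (fun i => d i - ((hC.eigenvalues i : ℝ) : ℂ))
          = Matrix.diagonal d - Matrix.diagonal (RCLike.ofReal ∘ hC.eigenvalues) := by
        rw [Matrix.diagonal_sub]
        rfl
      rw [this, Matrix.mul_sub, Matrix.sub_mul]
    rw [hsub]
    have hdiag : (Matrix.diagonal (fun i => d i - ((hC.eigenvalues i : ℝ) : ℂ))).PosSemidef := by
      apply Matrix.PosSemidef.diagonal
      intro i
      rw [hd]
      simp only []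
      rw [← Complex.ofReal_sub]
      exact Complex.zero_le_real.mpr (by simp [le_max_left])
    have := hdiag.mul_mul_conjTranspose_same V
    rwa [← Matrix.star_eq_conjTranspose] at this
  · rw [trace_unitary_conj hC.eigenvectorUnitary, Matrix.trace_diagonal]
    rw [hd]
    push_cast
    rfl

theorem mirsky_sorted {ρ σ : Matrix (Fin D) (Fin D) ℂ} (hρ : ρ.IsHermitian)
    (hσ : σ.IsHermitian) (hd : (ρ - σ).IsHermitian) :
    ∑ i, |hρ.eigenvalues (Tuple.sort hρ.eigenvalues i)
          - hσ.eigenvalues (Tuple.sort hσ.eigenvalues i)|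
      ≤ ∑ i, |hd.eigenvalues i| := by
  classical
  obtain ⟨P, hP, hPC, hPtr⟩ := exists_posPart hd
  set ω : Matrix (Fin D) (Fin D) ℂ := σ + P with hω
  have hωh : ω.IsHermitian := hσ.add hP.1
  have h1 : (ω - ρ).PosSemidef := by
    have : ω - ρ = P - (ρ - σ) := by rw [hω]; abel
    rw [this]
    exact hPC
  have h2 : (ω - σ).PosSemidef := by
    have : ω - σ = P := by rw [hω]; abel
    rw [this]
    exact hP
  have hw1 : ∀ i, hρ.eigenvalues (Tuple.sort hρ.eigenvalues i)
      ≤ hωh.eigenvalues (Tuple.sort hωh.eigenvalues i) := fun i => weyl_mono hρ hωh h1 i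
  have hw2 : ∀ i, hσ.eigenvalues (Tuple.sort hσ.eigenvalues i)
      ≤ hωh.eigenvalues (Tuple.sort hωh.eigenvalues i) := fun i => weyl_mono hσ hωh h2 i
  have habs : ∀ i, |hρ.eigenvalues (Tuple.sort hρ.eigenvalues i)
      - hσ.eigenvalues (Tuple.sort hσ.eigenvalues i)|
      ≤ (2 * hωh.eigenvalues (Tuple.sort hωh.eigenvalues i)
        - hρ.eigenvalues (Tuple.sort hρ.eigenvalues i)
        - hσ.eigenvalues (Tuple.sort hσ.eigenvalues i)) := by
    intro i
    rw [abs_le]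
    constructor
    · linarith [hw1 i, hw2 i]
    · linarith [hw1 i, hw2 i]
  have hsum := Finset.sum_le_sum (fun i (_ : i ∈ Finset.univ) => habs i)
  have hperm : ∀ {B : Matrix (Fin D) (Fin D) ℂ} (hB : B.IsHermitian),
      ∑ i, hB.eigenvalues (Tuple.sort hB.eigenvalues i) = B.trace.re := by
    intro B hB
    rw [← sum_eigenvalues_real hB]
    exact Equiv.sum_comp (Tuple.sort hB.eigenvalues) hB.eigenvalues
  have hsum2 : ∑ i, (2 * hωh.eigenvalues (Tuple.sort hωh.eigenvalues i)
        - hρ.eigenvalues (Tuple.sort hρ.eigenvalues i)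
        - hσ.eigenvalues (Tuple.sort hσ.eigenvalues i))
      = 2 * ω.trace.re - ρ.trace.re - σ.trace.re := by
    rw [Finset.sum_sub_distrib, Finset.sum_sub_distrib, ← Finset.mul_sum]
    rw [hperm hρ, hperm hσ, hperm hωh]
  have hctr : ∑ i, hd.eigenvalues i = ρ.trace.re - σ.trace.re := by
    rw [sum_eigenvalues_real hd, Matrix.trace_sub, Complex.sub_re]
  have hωtr : ω.trace.re = σ.trace.re + ∑ i, max (hd.eigenvalues i) 0 := by
    rw [hω, Matrix.trace_add, Complex.add_re, hPtr]
    simp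
  have hmaxabs : ∑ i, (2 * max (hd.eigenvalues i) 0) - ∑ i, hd.eigenvalues i
      = ∑ i, |hd.eigenvalues i| := by
    rw [← Finset.sum_sub_distrib]
    apply Finset.sum_congr rfl
    intro i _
    rcases le_total (hd.eigenvalues i) 0 with h | h
    · rw [max_eq_right h, abs_of_nonpos h]; ring
    · rw [max_eq_left h, abs_of_nonneg h]; ring
  rw [hsum2] at hsum
  rw [← Finset.mul_sum] at hmaxabs
  calc ∑ i, |hρ.eigenvalues (Tuple.sort hρ.eigenvalues i)
          - hσ.eigenvalues (Tuple.sort hσ.eigenvalues i)|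
      ≤ 2 * ω.trace.re - ρ.trace.re - σ.trace.re := hsum
    _ = 2 * (∑ i, max (hd.eigenvalues i) 0) - ∑ i, hd.eigenvalues i := by
        rw [hωtr, hctr]; ring
    _ = ∑ i, |hd.eigenvalues i| := hmaxabs

lemma conj_entry_eq (U : Matrix.unitaryGroup (Fin D) ℂ) (M : Matrix (Fin D) (Fin D) ℂ)
    (i : Fin D) :
    (star (U : Matrix (Fin D) (Fin D) ℂ) * M * (U : Matrix (Fin D) (Fin D) ℂ)) i i
      = dotProduct (star (fun j => (U : Matrix (Fin D) (Fin D) ℂ) j i))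
          (M *ᵥ (fun j => (U : Matrix (Fin D) (Fin D) ℂ) j i)) := by
  simp only [Matrix.mul_apply, Matrix.mulVec, dotProduct, Matrix.star_apply,
    Pi.star_apply, Finset.sum_mul, Finset.mul_sum]
  rw [Finset.sum_comm]
  apply Finset.sum_congr rfl
  intro j _
  apply Finset.sum_congr rfl
  intro k _
  ring

/-- For a psd state `A` and a unitary `U`, the diagonal of `U† A U` sums over a set
missing an index `k` is at most `1 - λmin(A)`. -/
lemma sum_diag_conj_le (U : Matrix.unitaryGroup (Fin D) ℂ) {A : Matrix (Fin D) (Fin D) ℂ}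
    (hA : A.IsHermitian) (hApsd : A.PosSemidef) (htr : A.trace = 1)
    (S : Finset (Fin D)) (k : Fin D) (hk : k ∉ S) (lmin : ℝ)
    (hlmin : ∀ j, lmin ≤ hA.eigenvalues j) :
    ∑ i ∈ S, ((star (U : Matrix (Fin D) (Fin D) ℂ) * A * (U : Matrix (Fin D) (Fin D) ℂ)) i i).re
      ≤ 1 - lmin := by
  classical
  set F : Fin D → ℝ := fun i =>
    ((star (U : Matrix (Fin D) (Fin D) ℂ) * A * (U : Matrix (Fin D) (Fin D) ℂ)) i i).re with hF
  set col : Fin D → (Fin D → ℂ) := fun i => (fun j => (U : Matrix (Fin D) (Fin D) ℂ) j i) with hcol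
  have hFdot : ∀ i, ((star (U : Matrix (Fin D) (Fin D) ℂ) * A * (U : Matrix (Fin D) (Fin D) ℂ)) i i)
      = dotProduct (star (col i)) (A *ᵥ (col i)) := fun i => conj_entry_eq U A i
  have hF0 : ∀ i, 0 ≤ F i := by
    intro i
    rw [hF]
    simp only []
    rw [hFdot i]
    have := hApsd.dotProduct_mulVec_nonneg (col i)
    rw [Complex.le_def] at this
    exact this.1
  have hcolnorm : ∀ i, dotProduct (star (col i)) (col i) = 1 := by
    intro i
    have : dotProduct (star (col i)) (col i)
        = (star (U : Matrix (Fin D) (Fin D) ℂ) * (U : Matrix (Fin D) (Fin D) ℂ)) i i := by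
      simp only [Matrix.mul_apply, dotProduct, Matrix.star_apply]
      apply Finset.sum_congr rfl
      intro j _
      rfl
    rw [this, Matrix.UnitaryGroup.star_mul_self U, Matrix.one_apply_eq]
  have hFmin : ∀ i, lmin ≤ F i := by
    intro i
    rw [hF]
    simp only []
    rw [hFdot i, qf_expand_real hA (col i)]
    have hnorm := norm_expand_real hA (col i)
    rw [hcolnorm i] at hnorm
    have hnorm' : ∑ j, Complex.normSq
        ((star (hA.eigenvectorUnitary : Matrix (Fin D) (Fin D) ℂ) *ᵥ col i) j) = 1 := by
      exact_mod_cast hnorm.symm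
    rw [Complex.ofReal_re]
    calc lmin = lmin * ∑ j, Complex.normSq
          ((star (hA.eigenvectorUnitary : Matrix (Fin D) (Fin D) ℂ) *ᵥ col i) j) := by
          rw [hnorm', mul_one]
      _ = ∑ j, lmin * Complex.normSq
          ((star (hA.eigenvectorUnitary : Matrix (Fin D) (Fin D) ℂ) *ᵥ col i) j) := by
          rw [Finset.mul_sum]
      _ ≤ ∑ j, hA.eigenvalues j * Complex.normSq
          ((star (hA.eigenvectorUnitary : Matrix (Fin D) (Fin D) ℂ) *ᵥ col i) j) := by
          apply Finset.sum_le_sum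
          intro j _
          exact mul_le_mul_of_nonneg_right (hlmin j) (Complex.normSq_nonneg _)
  have hFsum : ∑ i, F i = 1 := by
    have h1 : ∑ i, ((star (U : Matrix (Fin D) (Fin D) ℂ) * A * (U : Matrix (Fin D) (Fin D) ℂ)) i i)
        = (star (U : Matrix (Fin D) (Fin D) ℂ) * A * (U : Matrix (Fin D) (Fin D) ℂ)).trace := rfl
    have h2 : (star (U : Matrix (Fin D) (Fin D) ℂ) * A * (U : Matrix (Fin D) (Fin D) ℂ)).trace
        = A.trace := by
      rw [Matrix.trace_mul_cycle]
      rw [show (U : Matrix (Fin D) (Fin D) ℂ) * star (U : Matrix (Fin D) (Fin D) ℂ) = 1 from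
        (Matrix.mem_unitaryGroup_iff).mp U.2, Matrix.one_mul]
    have : ∑ i, F i = (∑ i, ((star (U : Matrix (Fin D) (Fin D) ℂ) * A
        * (U : Matrix (Fin D) (Fin D) ℂ)) i i)).re := by
      rw [Complex.re_sum]
    rw [this, h1, h2, htr]
    simp
  have hsub : S ⊆ Finset.univ.erase k := by
    intro j hj
    rw [Finset.mem_erase]
    exact ⟨fun hjk => hk (hjk ▸ hj), Finset.mem_univ j⟩
  calc ∑ i ∈ S, F i ≤ ∑ i ∈ Finset.univ.erase k, F i :=
        Finset.sum_le_sum_of_subset_of_nonneg hsub (fun i _ _ => hF0 i)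
    _ = 1 - F k := by
        have := Finset.sum_erase_add Finset.univ F (Finset.mem_univ k)
        rw [hFsum] at this
        linarith
    _ ≤ 1 - lmin := by linarith [hFmin k]

theorem min_eig_le {ρ σ : Matrix (Fin D) (Fin D) ℂ} (hρ : ρ.IsHermitian)
    (hσ : σ.IsHermitian) (hρpsd : ρ.PosSemidef) (hσpsd : σ.PosSemidef)
    (hρtr : ρ.trace = 1) (hσtr : σ.trace = 1) (hd : (ρ - σ).IsHermitian)
    (hD : 1 ≤ D) (T : ℝ) (hT : T = (∑ i, |hd.eigenvalues i|) / 2) :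
    (∃ i₀, hρ.eigenvalues i₀ ≤ 1 - T) ∧ (∃ j₀, hσ.eigenvalues j₀ ≤ 1 - T) := by
  classical
  set c := hd.eigenvalues with hc
  set U := hd.eigenvectorUnitary with hU
  have huniv : (Finset.univ : Finset (Fin D)).Nonempty := by
    rw [Finset.univ_nonempty_iff]
    exact Fin.pos_iff_nonempty.mp hD
  have hsumc : ∑ i, c i = 0 := by
    rw [hc, sum_eigenvalues_real hd, Matrix.trace_sub, hρtr, hσtr]
    simp
  -- diagonal entries of U† (ρ-σ) U are the eigenvalues
  have hdiagC : ∀ i, ((star (U : Matrix (Fin D) (Fin D) ℂ) * (ρ - σ)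
      * (U : Matrix (Fin D) (Fin D) ℂ)) i i) = ((c i : ℝ) : ℂ) := by
    intro i
    rw [← Unitary.conjStarAlgAut_star_apply (S := ℂ), hd.conjStarAlgAut_star_eigenvectorUnitary]
    simp [Matrix.diagonal_apply_eq, hc]
  -- real diagonal entries for ρ and σ
  set Fρ : Fin D → ℝ := fun i =>
    ((star (U : Matrix (Fin D) (Fin D) ℂ) * ρ * (U : Matrix (Fin D) (Fin D) ℂ)) i i).re with hFρ
  set Fσ : Fin D → ℝ := fun i =>
    ((star (U : Matrix (Fin D) (Fin D) ℂ) * σ * (U : Matrix (Fin D) (Fin D) ℂ)) i i).re with hFσ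
  have hcF : ∀ i, c i = Fρ i - Fσ i := by
    intro i
    have hsplit : (star (U : Matrix (Fin D) (Fin D) ℂ) * (ρ - σ)
        * (U : Matrix (Fin D) (Fin D) ℂ)) i i
        = (star (U : Matrix (Fin D) (Fin D) ℂ) * ρ * (U : Matrix (Fin D) (Fin D) ℂ)) i i
          - (star (U : Matrix (Fin D) (Fin D) ℂ) * σ * (U : Matrix (Fin D) (Fin D) ℂ)) i i := by
      rw [Matrix.mul_sub, Matrix.sub_mul]
      simp [Matrix.sub_apply]
    have := congrArg Complex.re (hsplit.symm.trans (hdiagC i))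
    rw [Complex.sub_re, Complex.ofReal_re] at this
    rw [hFρ, hFσ]
    exact this.symm
  have hFσ0 : ∀ i, 0 ≤ Fσ i := by
    intro i
    rw [hFσ]
    simp only []
    rw [conj_entry_eq U σ i]
    exact (Complex.le_def.mp (hσpsd.dotProduct_mulVec_nonneg _)).1
  have hFρ0 : ∀ i, 0 ≤ Fρ i := by
    intro i
    rw [hFρ]
    simp only []
    rw [conj_entry_eq U ρ i]
    exact (Complex.le_def.mp (hρpsd.dotProduct_mulVec_nonneg _)).1
  -- min eigenvalues
  obtain ⟨i₀, _, hi₀⟩ := Finset.exists_min_image Finset.univ hρ.eigenvalues huniv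
  obtain ⟨j₀, _, hj₀⟩ := Finset.exists_min_image Finset.univ hσ.eigenvalues huniv
  constructor
  · -- bound for ρ
    refine ⟨i₀, ?_⟩
    set S : Finset (Fin D) := Finset.univ.filter (fun i => 0 < c i) with hS
    have hTS : T = ∑ i ∈ S, c i := by
      have hmax : ∑ i, max (c i) 0 = ∑ i ∈ S, c i := by
        rw [hS, Finset.sum_filter]
        apply Finset.sum_congr rfl
        intro i _
        rcases lt_or_ge 0 (c i) with h | h
        · rw [if_pos h, max_eq_left h.le]
        · rw [if_neg (not_lt.mpr h), max_eq_right h]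
      have habs : ∑ i, max (c i) 0 = T := by
        rw [hT]
        rw [show (∑ i, |c i|) = ∑ i, (2 * max (c i) 0 - c i) by
          apply Finset.sum_congr rfl
          intro i _
          rcases le_total (c i) 0 with h | h
          · rw [max_eq_right h, abs_of_nonpos h]; ring
          · rw [max_eq_left h, abs_of_nonneg h]; ring]
        rw [Finset.sum_sub_distrib, ← Finset.mul_sum, hsumc]
        ring
      rw [← habs, hmax]
    have hex : ∃ k, ¬ 0 < c k := by
      by_contra h
      push_neg at h
      have : 0 < ∑ i, c i := Finset.sum_pos (fun i _ => h i) huniv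
      rw [hsumc] at this
      exact lt_irrefl 0 this
    obtain ⟨k, hk⟩ := hex
    have hkS : k ∉ S := by
      rw [hS, Finset.mem_filter]
      tauto
    have hchain : T ≤ ∑ i ∈ S, Fρ i := by
      rw [hTS]
      apply Finset.sum_le_sum
      intro i _
      rw [hcF i]
      linarith [hFσ0 i]
    have hbound := sum_diag_conj_le U hρ hρpsd hρtr S k hkS (hρ.eigenvalues i₀)
      (fun j => hi₀ j (Finset.mem_univ j))
    linarith
  · -- bound for σ
    refine ⟨j₀, ?_⟩
    set S : Finset (Fin D) := Finset.univ.filter (fun i => c i < 0) with hS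
    have hTS : T = ∑ i ∈ S, (- c i) := by
      have hmax : ∑ i, max (- c i) 0 = ∑ i ∈ S, (- c i) := by
        rw [hS, Finset.sum_filter]
        apply Finset.sum_congr rfl
        intro i _
        rcases lt_or_ge (c i) 0 with h | h
        · rw [if_pos h, max_eq_left (by linarith)]
        · rw [if_neg (not_lt.mpr h), max_eq_right (by linarith)]
      have habs : ∑ i, max (- c i) 0 = T := by
        rw [hT]
        rw [show (∑ i, |c i|) = ∑ i, (2 * max (- c i) 0 + c i) by
          apply Finset.sum_congr rfl
          intro i _
          rcases le_total (c i) 0 with h | h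
          · rw [max_eq_left (by linarith), abs_of_nonpos h]; ring
          · rw [max_eq_right (by linarith), abs_of_nonneg h]; ring]
        rw [Finset.sum_add_distrib, ← Finset.mul_sum, hsumc]
        ring
      rw [← habs, hmax]
    have hex : ∃ k, ¬ c k < 0 := by
      by_contra h
      push_neg at h
      have : ∑ i, c i < 0 := Finset.sum_neg (fun i _ => h i) huniv
      rw [hsumc] at this
      exact lt_irrefl 0 this
    obtain ⟨k, hk⟩ := hex
    have hkS : k ∉ S := by
      rw [hS, Finset.mem_filter]
      tauto
    have hchain : T ≤ ∑ i ∈ S, Fσ i := by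
      rw [hTS]
      apply Finset.sum_le_sum
      intro i _
      rw [show - c i = Fσ i - Fρ i by rw [hcF i]; ring]
      linarith [hFρ0 i]
    have hbound := sum_diag_conj_le U hσ hσpsd hσtr S k hkS (hσ.eigenvalues j₀)
      (fun j => hj₀ j (Finset.mem_univ j))
    linarith


open scoped ComplexOrder

/-- The von Neumann entropy `S(ρ) = -tr(ρ ln ρ)` of a matrix, computed via eigenvalues
(junk value `0` if the matrix is not Hermitian). -/
noncomputable def vonNeumannEntropy {D : ℕ} (ρ : Matrix (Fin D) (Fin D) ℂ) : ℝ :=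
  if h : ρ.IsHermitian then -∑ i, h.eigenvalues i * Real.log (h.eigenvalues i) else 0

lemma vonNeumannEntropy_eq {D : ℕ} {ρ : Matrix (Fin D) (Fin D) ℂ} (hρ : ρ.IsHermitian) :
    vonNeumannEntropy ρ = ∑ i, Real.negMulLog (hρ.eigenvalues i) := by
  rw [vonNeumannEntropy, dif_pos hρ]
  rw [← Finset.sum_neg_distrib]
  apply Finset.sum_congr rfl
  intro i _
  rw [Real.negMulLog]
  ring

/-- Fannes–Audenaert continuity bound: if `ρ, σ` are density matrices on `ℂ^D` and
`T = ‖ρ − σ‖₁/2` is their trace distance, then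
`|S(ρ) − S(σ)| ≤ T ln(D−1) − T ln T − (1−T) ln(1−T)`
(with the convention `0 ln 0 = 0`, which is `Real.log 0 = 0` here). -/
theorem fannes_audenaert {D : ℕ}
    (ρ σ : Matrix (Fin D) (Fin D) ℂ)
    (hρ : ρ.IsHermitian) (hσ : σ.IsHermitian)
    (hρpsd : ρ.PosSemidef) (hσpsd : σ.PosSemidef)
    (hρtr : ρ.trace = 1) (hσtr : σ.trace = 1)
    (T : ℝ) (hT : T = (∑ i, |(hρ.sub hσ).eigenvalues i|) / 2) :
    |vonNeumannEntropy ρ - vonNeumannEntropy σ|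
      ≤ T * Real.log ((D : ℝ) - 1) - T * Real.log T - (1 - T) * Real.log (1 - T) := by
  classical
  set hd := hρ.sub hσ with hhd
  set a := hρ.eigenvalues with hadef
  set b := hσ.eigenvalues with hbdef
  have hD1 : 1 ≤ D := by
    by_contra h
    push_neg at h
    interval_cases D
    · rw [Matrix.trace] at hρtr
      simp at hρtr
  have ha0 : ∀ i, 0 ≤ a i := fun i => hρpsd.eigenvalues_nonneg i
  have hb0 : ∀ i, 0 ≤ b i := fun i => hσpsd.eigenvalues_nonneg i
  have ha1 : ∑ i, a i = 1 := by
    rw [hadef, sum_eigenvalues_real hρ, hρtr, Complex.one_re]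
  have hb1 : ∑ i, b i = 1 := by
    rw [hbdef, sum_eigenvalues_real hσ, hσtr, Complex.one_re]
  have hSρ : vonNeumannEntropy ρ = ∑ i, Real.negMulLog (a i) := vonNeumannEntropy_eq hρ
  have hSσ : vonNeumannEntropy σ = ∑ i, Real.negMulLog (b i) := vonNeumannEntropy_eq hσ
  have hT0 : 0 ≤ T := by
    rw [hT]
    apply div_nonneg _ (by norm_num)
    exact Finset.sum_nonneg fun i _ => abs_nonneg _
  have hgoal : T * Real.log ((D : ℝ) - 1) - T * Real.log T - (1 - T) * Real.log (1 - T)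
      = T * Real.log ((D : ℝ) - 1) + bent T := by
    simp [bent, Real.negMulLog]
    ring
  rw [hgoal, hSρ, hSσ]
  rcases le_or_gt T (1 - 1/(D:ℝ)) with hreg | hreg
  · -- small T regime : Mirsky + sharp classical bound + monotonicity
    set sa : Fin D → ℝ := fun i => a (Tuple.sort a i) with hsa
    set sb : Fin D → ℝ := fun i => b (Tuple.sort b i) with hsb
    set t' : ℝ := (∑ i, |sa i - sb i|) / 2 with ht'
    have ht'T : t' ≤ T := by
      rw [ht', hT]
      apply div_le_div_of_nonneg_right _ (by norm_num)
      · exact mirsky_sorted hρ hσ hd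
    have ht'0 : 0 ≤ t' := by
      rw [ht']
      apply div_nonneg _ (by norm_num)
      exact Finset.sum_nonneg fun i _ => abs_nonneg _
    have hcf := classical_fannes sa sb (fun i => ha0 _) (fun i => hb0 _)
      (by rw [hsa]; exact Equiv.sum_comp (Tuple.sort a) a |>.trans ha1)
      (by rw [hsb]; exact Equiv.sum_comp (Tuple.sort b) b |>.trans hb1)
      t' ht'
    have hHa : ∑ i, Real.negMulLog (sa i) = ∑ i, Real.negMulLog (a i) :=
      Equiv.sum_comp (Tuple.sort a) (fun k => Real.negMulLog (a k))
    have hHb : ∑ i, Real.negMulLog (sb i) = ∑ i, Real.negMulLog (b i) :=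
      Equiv.sum_comp (Tuple.sort b) (fun k => Real.negMulLog (b k))
    rw [hHa, hHb] at hcf
    have hmono := gmono hD1 ht'0 ht'T hreg
    calc |∑ i, Real.negMulLog (a i) - ∑ i, Real.negMulLog (b i)|
        ≤ t' * Real.log ((D:ℝ) - 1) + bent t' := hcf
      _ ≤ T * Real.log ((D:ℝ) - 1) + bent T := hmono
  · -- large T regime
    obtain ⟨⟨i₀, hi₀⟩, ⟨j₀, hj₀⟩⟩ := min_eig_le hρ hσ hρpsd hσpsd hρtr hσtr hd hD1 T hT
    have hD2 : 2 ≤ D := by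
      by_contra h
      push_neg at h
      interval_cases D
      · have h2 : a i₀ = a 0 := by congr; exact Subsingleton.elim _ _
        have h3 : a 0 = 1 := by simpa using ha1
        have hia : a i₀ ≤ 1 - T := hi₀
        rw [h2, h3] at hia
        norm_num at hreg
        linarith
    have hD2' : (2:ℝ) ≤ (D:ℝ) := by exact_mod_cast hD2
    have hx : 1 - T ≤ 1/(D:ℝ) := by linarith
    have hbig : ∀ (u : Fin D → ℝ) (hu0 : ∀ i, 0 ≤ u i) (hu1 : ∑ i, u i = 1)
        (k : Fin D) (hk : u k ≤ 1 - T),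
        ∑ i, Real.negMulLog (u i) ≤ T * Real.log ((D:ℝ) - 1) + bent T := by
      intro u hu0 hu1 k hk
      have hgrp := grouping u hu0 hu1 k
      rw [show ((Fintype.card (Fin D) : ℝ) - 1) = (D:ℝ) - 1 by simp] at hgrp
      have hfm := fmono hD2 (hu0 k) hk hx
      have hbsym : bent (1 - T) = bent T := by
        rw [bent, bent, show (1:ℝ) - (1 - T) = T by ring]
        ring
      calc ∑ i, Real.negMulLog (u i)
          ≤ Real.negMulLog (u k) + Real.negMulLog (1 - u k)
            + (1 - u k) * Real.log ((D:ℝ) - 1) := hgrp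
        _ = bent (u k) + (1 - u k) * Real.log ((D:ℝ) - 1) := by rw [bent]
        _ ≤ bent (1 - T) + (1 - (1 - T)) * Real.log ((D:ℝ) - 1) := hfm
        _ = T * Real.log ((D:ℝ) - 1) + bent T := by
            rw [hbsym, show (1:ℝ) - (1 - T) = T by ring]
            ring
    have hHa_nonneg : 0 ≤ ∑ i, Real.negMulLog (a i) := by
      apply Finset.sum_nonneg
      intro i _
      apply Real.negMulLog_nonneg (ha0 i)
      calc a i ≤ ∑ j, a j := Finset.single_le_sum (fun j _ => ha0 j) (Finset.mem_univ i)
        _ = 1 := ha1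
    have hHb_nonneg : 0 ≤ ∑ i, Real.negMulLog (b i) := by
      apply Finset.sum_nonneg
      intro i _
      apply Real.negMulLog_nonneg (hb0 i)
      calc b i ≤ ∑ j, b j := Finset.single_le_sum (fun j _ => hb0 j) (Finset.mem_univ i)
        _ = 1 := hb1
    have hA := hbig a ha0 ha1 i₀ hi₀
    have hB := hbig b hb0 hb1 j₀ hj₀
    rw [abs_sub_le_iff]
    constructor
    · linarith
    · linarith
end

section
/- For integers d ≥ 2, −d ∫₀¹ x · (d−1)(1−x)^{d−2} · ln x dx = ∑_{k=2}^{d} 1/k. -/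
open Real Finset intervalIntegral MeasureTheory

private noncomputable def Gaux (n : ℕ) : ℝ → ℝ := fun x =>
  (1 - (1 - x) ^ (n + 1)) / (n + 1) * Real.log x
    + (∑ k ∈ Finset.range (n + 1), (1 - x) ^ (k + 1) / (k + 1)) / (n + 1)

private lemma geom_all (n : ℕ) (x : ℝ) :
    x * ∑ k ∈ Finset.range (n + 1), (1 - x) ^ k = 1 - (1 - x) ^ (n + 1) := by
  have h := geom_sum_mul (1 - x) (n + 1)
  have : (1 - x) - 1 = -x := by ring
  rw [this] at h
  linarith [h]

private lemma Gaux_eq (n : ℕ) : Gaux n = fun x =>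
    (x * Real.log x) * ((∑ k ∈ Finset.range (n + 1), (1 - x) ^ k) / (n + 1))
    + (∑ k ∈ Finset.range (n + 1), (1 - x) ^ (k + 1) / (k + 1)) / (n + 1) := by
  funext x
  have h := geom_all n x
  unfold Gaux
  rw [← h]
  ring

private lemma Gaux_cont (n : ℕ) : Continuous (Gaux n) := by
  rw [Gaux_eq]
  apply Continuous.add
  · exact Real.continuous_mul_log.mul ((continuous_finset_sum _ fun k _ =>
      ((continuous_const.sub continuous_id).pow k)).div_const _)
  · exact (continuous_finset_sum _ fun k _ =>
      ((continuous_const.sub continuous_id).pow (k + 1)).div_const _).div_const _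

private lemma Gaux_deriv (n : ℕ) {x : ℝ} (hx : x ∈ Set.Ioo (0:ℝ) 1) :
    HasDerivAt (Gaux n) ((1 - x) ^ n * Real.log x) x := by
  have hx0 : x ≠ 0 := ne_of_gt hx.1
  have hc : ((n : ℝ) + 1) ≠ 0 := by positivity
  have h1x : HasDerivAt (fun y : ℝ => 1 - y) (-1 : ℝ) x := by
    simpa using (hasDerivAt_id x).const_sub 1
  have hpow : HasDerivAt (fun y : ℝ => (1 - y) ^ (n + 1))
      (((n : ℝ) + 1) * (1 - x) ^ n * (-1)) x := by
    have := h1x.fun_pow (n + 1)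
    simpa using this
  have hv : HasDerivAt (fun y : ℝ => (1 - (1 - y) ^ (n + 1)) / (n + 1))
      ((((n : ℝ) + 1) * (1 - x) ^ n) / (n + 1)) x := by
    have := (hpow.const_sub 1).div_const ((n : ℝ) + 1)
    simpa using this
  have hlog : HasDerivAt Real.log x⁻¹ x := Real.hasDerivAt_log hx0
  have hprod := hv.fun_mul hlog
  have hr : HasDerivAt (fun y : ℝ => ∑ k ∈ Finset.range (n + 1), (1 - y) ^ (k + 1) / (k + 1))
      (∑ k ∈ Finset.range (n + 1), -((1 - x) ^ k)) x := by
    apply HasDerivAt.fun_sum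
    intro k _
    have hk : ((k : ℝ) + 1) ≠ 0 := by positivity
    have := ((h1x.fun_pow (k + 1)).div_const ((k : ℝ) + 1))
    refine this.congr_deriv ?_
    push_cast
    field_simp
  have := hprod.fun_add (hr.div_const ((n : ℝ) + 1))
  refine this.congr_deriv ?_
  have hgeom : (∑ k ∈ Finset.range (n + 1), (1 - x) ^ k) = (1 - (1 - x) ^ (n + 1)) / x := by
    rw [eq_div_iff hx0, mul_comm]
    exact geom_all n x
  rw [Finset.sum_neg_distrib] at *
  rw [hgeom]
  field_simp
  ring

private lemma intInt (n : ℕ) :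
    IntervalIntegrable (fun x : ℝ => (1 - x) ^ n * Real.log x) volume 0 1 := by
  have h : IntervalIntegrable (fun x : ℝ => -((1 - x) ^ n * Real.log x)) volume 0 1 := by
    apply intervalIntegrable_deriv_of_nonneg (g := fun x => -Gaux n x)
    · exact (Gaux_cont n).neg.continuousOn
    · intro x hx
      simp only [min_def, max_def] at hx
      norm_num at hx
      exact (Gaux_deriv n hx).neg
    · intro x hx
      simp only [min_def, max_def] at hx
      norm_num at hx
      have h1 : (0:ℝ) ≤ (1 - x) ^ n := pow_nonneg (by linarith [hx.2]) n
      have h2 : Real.log x ≤ 0 := Real.log_nonpos (le_of_lt hx.1) (le_of_lt hx.2)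
      simpa using mul_nonneg h1 (neg_nonneg.2 h2)
  have h2 := h.neg
  rwa [show (-fun x : ℝ => -((1 - x) ^ n * Real.log x))
      = fun x : ℝ => (1 - x) ^ n * Real.log x from by funext x; simp] at h2

private lemma key (n : ℕ) :
    ∫ x in (0:ℝ)..1, (1 - x) ^ n * Real.log x
      = -(∑ k ∈ Finset.range (n + 1), 1 / ((k : ℝ) + 1)) / (n + 1) := by
  have hc : ((n : ℝ) + 1) ≠ 0 := by positivity
  rw [intervalIntegral.integral_eq_sub_of_hasDeriv_right_of_le (by norm_num)
      (Gaux_cont n).continuousOn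
      (fun x hx => (Gaux_deriv n hx).hasDerivWithinAt) (intInt n)]
  have h1 : Gaux n 1 = 0 := by
    unfold Gaux
    simp
  have h0 : Gaux n 0 = (∑ k ∈ Finset.range (n + 1), 1 / ((k : ℝ) + 1)) / (n + 1) := by
    unfold Gaux
    simp [Real.log_zero]
  rw [h1, h0]
  ring

private lemma harmonic_Icc (d : ℕ) (hd : 1 ≤ d) :
    ∑ k ∈ Finset.Icc 2 d, (1 : ℝ) / k
      = (∑ k ∈ Finset.range d, 1 / ((k : ℝ) + 1)) - 1 := by
  induction d, hd using Nat.le_induction with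
  | base => simp
  | succ n hn ih =>
    rw [← Finset.insert_Icc_right_eq_Icc_add_one (by omega : 2 ≤ n + 1),
      Finset.sum_insert (by simp), ih, Finset.sum_range_succ]
    push_cast
    ring

/-- The integral identity `−d ∫₀¹ x (d−1)(1−x)^{d−2} ln x dx = ∑_{k=2}^d 1/k` for `d ≥ 2`. -/
theorem neg_d_mul_integral_eq_harmonic (d : ℕ) (hd : 2 ≤ d) :
    -(d : ℝ) * ∫ x in (0 : ℝ)..1, x * ((d - 1 : ℝ) * (1 - x) ^ (d - 2)) * Real.log x
      = ∑ k ∈ Finset.Icc 2 d, (1 : ℝ) / k := by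
  set m := d - 2 with hm
  have hd2 : d = m + 2 := by omega
  have hsplit : ∀ x : ℝ, x * ((d - 1 : ℝ) * (1 - x) ^ (d - 2)) * Real.log x
      = ((d : ℝ) - 1) * ((1 - x) ^ m * Real.log x - (1 - x) ^ (m + 1) * Real.log x) := by
    intro x
    rw [← hm]
    have : (1 - x) ^ (m + 1) = (1 - x) ^ m * (1 - x) := pow_succ _ _
    rw [this]
    ring
  rw [intervalIntegral.integral_congr (fun x _ => hsplit x)]
  rw [intervalIntegral.integral_const_mul,
    intervalIntegral.integral_sub (intInt m) (intInt (m + 1)), key m, key (m + 1)]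
  rw [harmonic_Icc d (by omega)]
  set S := ∑ k ∈ Finset.range (m + 1), 1 / ((k : ℝ) + 1) with hS
  have hT : ∑ k ∈ Finset.range (d), 1 / ((k : ℝ) + 1) = S + 1 / ((m : ℝ) + 1 + 1) := by
    rw [hd2, Finset.sum_range_succ, hS]
    push_cast
    ring_nf
  have hT2 : ∑ k ∈ Finset.range (m + 1 + 1), 1 / ((k : ℝ) + 1) = S + 1 / ((m : ℝ) + 1 + 1) := by
    rw [← hd2] at *; exact hT
  rw [hT, hT2]
  have h1 : ((m : ℝ) + 1) = (d : ℝ) - 1 := by rw [hd2]; push_cast; ring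
  have hd0 : (d : ℝ) ≠ 0 := by positivity
  have hd1 : (d : ℝ) - 1 ≠ 0 := by
    have : (2:ℝ) ≤ (d:ℝ) := by exact_mod_cast hd
    linarith
  have hm' : ((m:ℝ)) = (d:ℝ) - 2 := by rw [hd2]; push_cast; ring
  have hd1' : (-1:ℝ) + (d:ℝ) ≠ 0 := fun h => hd1 (by linarith)
  push_cast
  rw [hm']
  clear_value S
  clear_value m
  clear hS hT hT2 hsplit hm hd2 h1 hm' hd hd1 m
  have e1 : (d:ℝ) - 2 + 1 ≠ 0 := fun h => hd1' (by linarith)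
  have e2 : (d:ℝ) - 2 + 1 + 1 ≠ 0 := fun h => hd0 (by linarith)
  field_simp
  ring
end

section
/- Let A be a Hermitian matrix whose spectrum has non-degenerate gaps and let B be any Hermitian matrix of the same size. Then for all sufficiently large Λ > 0, the spectrum of ΛA + B has non-degenerate gaps. -/
/-- A family of reals has non-degenerate gaps if all differences over ordered pairs of
distinct indices are pairwise distinct. -/
def NondegGaps {ι : Type*} (E : ι → ℝ) : Prop :=
  ∀ j k j' k' : ι, j ≠ k → E j - E k = E j' - E k' → j = j' ∧ k = k'

section Auxiliary

open Matrix Finset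

local notation "⟪" x ", " y "⟫" => @inner ℂ _ _ x y

/-- The eigenvector relation for a Hermitian matrix, at the level of `toEuclideanLin`. -/
lemma toEuclideanLin_eigvec {D : ℕ} {A : Matrix (Fin D) (Fin D) ℂ} (hA : A.IsHermitian)
    (a : Fin D) :
    Matrix.toEuclideanLin A (hA.eigenvectorBasis a)
      = (hA.eigenvalues a : ℂ) • (hA.eigenvectorBasis a : EuclideanSpace ℂ (Fin D)) := by
  have h := hA.mulVec_eigenvectorBasis a
  rw [Matrix.toEuclideanLin_apply]
  ext x
  simpa using congrFun h x

/-- Parseval identity for an orthonormal basis of Euclidean space. -/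
lemma parseval' {D : ℕ} (w : OrthonormalBasis (Fin D) ℂ (EuclideanSpace ℂ (Fin D)))
    (z : EuclideanSpace ℂ (Fin D)) :
    ‖z‖ ^ 2 = ∑ a, ‖⟪w a, z⟫‖ ^ 2 := by
  rw [← w.repr.norm_map z, EuclideanSpace.norm_eq, Real.sq_sqrt (by positivity)]
  simp_rw [w.repr_apply_apply]

/-- If `(γ a - α) ⟪w a, x⟫ = ⟪w a, y⟫` for all `a`, with `x` a unit vector and `‖y‖ ≤ C`,
then some `γ a` is within `C` of `α`. -/
lemma min_dist_le {D : ℕ} (hD : 0 < D)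
    (w : OrthonormalBasis (Fin D) ℂ (EuclideanSpace ℂ (Fin D)))
    (x y : EuclideanSpace ℂ (Fin D)) (hx : ‖x‖ = 1)
    (α : ℝ) (γ : Fin D → ℝ) (C : ℝ) (hC : 0 ≤ C) (hy : ‖y‖ ≤ C)
    (h : ∀ a, ((γ a : ℂ) - (α : ℂ)) * ⟪w a, x⟫ = ⟪w a, y⟫) :
    ∃ a, |γ a - α| ≤ C := by
  obtain ⟨a₀, -, ha₀⟩ := Finset.exists_min_image Finset.univ (fun a => |γ a - α|)
    ⟨⟨0, hD⟩, Finset.mem_univ _⟩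
  refine ⟨a₀, ?_⟩
  have hnorm : ∀ a : Fin D, ‖((γ a : ℂ) - (α : ℂ))‖ = |γ a - α| := by
    intro a
    rw [show ((γ a : ℂ) - (α : ℂ)) = ((γ a - α : ℝ) : ℂ) by push_cast; ring]
    exact (Complex.norm_real _).trans (Real.norm_eq_abs _)
  have key : |γ a₀ - α| ^ 2 ≤ C ^ 2 := by
    calc |γ a₀ - α| ^ 2 = |γ a₀ - α| ^ 2 * ‖x‖ ^ 2 := by rw [hx]; ring
    _ = ∑ a, |γ a₀ - α| ^ 2 * ‖⟪w a, x⟫‖ ^ 2 := by rw [parseval' w x, Finset.mul_sum]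
    _ ≤ ∑ a, |γ a - α| ^ 2 * ‖⟪w a, x⟫‖ ^ 2 := by
        refine Finset.sum_le_sum fun a _ => ?_
        have := ha₀ a (Finset.mem_univ a)
        gcongr
    _ = ∑ a, ‖((γ a : ℂ) - (α : ℂ)) * ⟪w a, x⟫‖ ^ 2 := by
        simp_rw [norm_mul, mul_pow, hnorm]
    _ = ∑ a, ‖⟪w a, y⟫‖ ^ 2 := by simp_rw [h]
    _ = ‖y‖ ^ 2 := (parseval' w y).symm
    _ ≤ C ^ 2 := by gcongr
  exact le_of_pow_le_pow_left₀ two_ne_zero hC key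

/-- Two-sided eigenvalue perturbation estimate: if `N u a = ν a • u a + P u a` for an
orthonormal basis `u`, with `‖P x‖ ≤ C ‖x‖`, then every eigenvalue of `N` is within `C` of
some `ν a`, and conversely every `ν a` is within `C` of some eigenvalue of `N`. -/
lemma approx_eig {D : ℕ} (hD : 0 < D) (N P : Matrix (Fin D) (Fin D) ℂ)
    (hN : N.IsHermitian) (hP : P.IsHermitian)
    (u : OrthonormalBasis (Fin D) ℂ (EuclideanSpace ℂ (Fin D)))
    (ν : Fin D → ℝ) (C : ℝ) (hC0 : 0 ≤ C)
    (hu : ∀ a, Matrix.toEuclideanLin N (u a)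
        = (ν a : ℂ) • (u a : EuclideanSpace ℂ (Fin D)) + Matrix.toEuclideanLin P (u a))
    (hC : ∀ x : EuclideanSpace ℂ (Fin D), ‖Matrix.toEuclideanLin P x‖ ≤ C * ‖x‖) :
    (∀ i, ∃ a, |ν a - hN.eigenvalues i| ≤ C) ∧ (∀ a, ∃ i, |hN.eigenvalues i - ν a| ≤ C) := by
  set T := Matrix.toEuclideanLin N with hT
  set P' := Matrix.toEuclideanLin P with hP'
  set v := hN.eigenvectorBasis with hv'
  set μ := hN.eigenvalues with hμ'
  have hsym : ∀ x y : EuclideanSpace ℂ (Fin D), ⟪T x, y⟫ = ⟪x, T y⟫ :=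
    (Matrix.isHermitian_iff_isSymmetric.mp hN)
  have hPsym : ∀ x y : EuclideanSpace ℂ (Fin D), ⟪P' x, y⟫ = ⟪x, P' y⟫ :=
    (Matrix.isHermitian_iff_isSymmetric.mp hP)
  have hv : ∀ i, T (v i) = (μ i : ℂ) • (v i : EuclideanSpace ℂ (Fin D)) :=
    fun i => toEuclideanLin_eigvec hN i
  constructor
  · intro i
    refine min_dist_le hD u (v i) (-(P' (v i))) (v.orthonormal.1 i) (μ i) ν C hC0 ?_ ?_
    · rw [norm_neg]
      calc ‖P' (v i)‖ ≤ C * ‖(v i : EuclideanSpace ℂ (Fin D))‖ := hC _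
      _ = C := by rw [v.orthonormal.1 i, mul_one]
    · intro a
      have h0 := hsym (u a) (v i)
      rw [hu a, hv i] at h0
      rw [inner_add_left, inner_smul_left, inner_smul_right, Complex.conj_ofReal,
        hPsym (u a) (v i)] at h0
      rw [inner_neg_right]
      linear_combination h0
  · intro a
    refine min_dist_le hD v (u a) (P' (u a)) (u.orthonormal.1 a) (ν a) μ C hC0 ?_ ?_
    · calc ‖P' (u a)‖ ≤ C * ‖(u a : EuclideanSpace ℂ (Fin D))‖ := hC _
      _ = C := by rw [u.orthonormal.1 a, mul_one]
    · intro i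
      have h0 := hsym (v i) (u a)
      rw [hu a, hv i] at h0
      rw [inner_add_right, inner_smul_left, inner_smul_right, Complex.conj_ofReal] at h0
      linear_combination h0

end Auxiliary

open Matrix Finset in
/-- If the Hermitian matrix `A` has a spectrum with non-degenerate gaps and `B` is any
Hermitian matrix of the same size, then for all sufficiently large `Λ > 0` the spectrum of
`ΛA + B` has non-degenerate gaps. -/
theorem nondeg_gaps_of_large_scaling {D : ℕ}
    (A B : Matrix (Fin D) (Fin D) ℂ) (hA : A.IsHermitian) (hB : B.IsHermitian)
    (hAgaps : NondegGaps hA.eigenvalues) :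
    ∃ Λ₀ : ℝ, 0 < Λ₀ ∧ ∀ Λ : ℝ, Λ₀ ≤ Λ →
      ∀ (hAB : ((Λ : ℂ) • A + B).IsHermitian), NondegGaps hAB.eigenvalues := by
  rcases Nat.eq_zero_or_pos D with hD | hD
  · exact ⟨1, one_pos, fun Λ _ hAB j k j' k' _ _ => absurd j.isLt (by omega)⟩
  set E := hA.eigenvalues with hE
  -- the minimal nonzero gap difference
  set T : Finset (Fin D × Fin D × Fin D × Fin D) :=
    Finset.univ.filter fun t => t.1 ≠ t.2.1 ∧ ¬(t.1 = t.2.2.1 ∧ t.2.1 = t.2.2.2) with hT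
  set s : Finset ℝ :=
    insert 1 (T.image fun t => |(E t.1 - E t.2.1) - (E t.2.2.1 - E t.2.2.2)|) with hs
  have hsne : s.Nonempty := ⟨1, Finset.mem_insert_self _ _⟩
  set δ : ℝ := s.min' hsne with hδ
  have hδpos : 0 < δ := by
    rw [hδ, Finset.lt_min'_iff]
    intro y hy
    rw [hs, Finset.mem_insert] at hy
    rcases hy with rfl | hy
    · exact one_pos
    · obtain ⟨t, ht, rfl⟩ := Finset.mem_image.mp hy
      rw [hT, Finset.mem_filter] at ht
      obtain ⟨-, h1, h2⟩ := ht
      rw [abs_pos, sub_ne_zero]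
      intro hc
      by_cases h3 : t.2.2.1 = t.2.2.2
      · rw [h3, sub_self] at hc
        have := hAgaps t.1 t.2.1 t.2.1 t.1 h1 (by linarith [sub_eq_zero.mp hc])
        exact h1 this.1
      · exact h2 (hAgaps t.1 t.2.1 t.2.2.1 t.2.2.2 h1 hc)
  have hδle : ∀ j k j' k' : Fin D, j ≠ k → ¬(j = j' ∧ k = k') →
      δ ≤ |(E j - E k) - (E j' - E k')| := by
    intro j k j' k' h1 h2
    refine Finset.min'_le _ _ ?_
    rw [hs]
    refine Finset.mem_insert_of_mem (Finset.mem_image.mpr ⟨(j, k, j', k'), ?_, rfl⟩)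
    rw [hT, Finset.mem_filter]
    exact ⟨Finset.mem_univ _, h1, h2⟩
  have hsep : ∀ a b : Fin D, a ≠ b → δ ≤ |E a - E b| := by
    intro a b hab
    have := hδle a b a a hab (by rintro ⟨-, h⟩; exact hab h.symm)
    simpa using this
  set C : ℝ := ‖Matrix.toEuclideanCLM (𝕜 := ℂ) (n := Fin D) B‖ with hCdef
  have hC0 : 0 ≤ C := norm_nonneg _
  have hC : ∀ x : EuclideanSpace ℂ (Fin D), ‖Matrix.toEuclideanLin B x‖ ≤ C * ‖x‖ :=
    fun x => (Matrix.toEuclideanCLM (𝕜 := ℂ) B).le_opNorm x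
  refine ⟨(4 * C + 1) / δ, by positivity, fun Λ hΛ hAB => ?_⟩
  have hΛδ : 4 * C < Λ * δ := by
    rw [div_le_iff₀ hδpos] at hΛ
    linarith
  have hΛpos : 0 < Λ := by
    rcases (lt_or_ge 0 Λ) with h | h
    · exact h
    · nlinarith
  -- apply the two-sided approximation
  obtain ⟨hfwd, hbwd⟩ := approx_eig hD ((Λ : ℂ) • A + B) B hAB hB hA.eigenvectorBasis
    (fun a => Λ * E a) C hC0
    (fun a => by
      rw [map_add, _root_.map_smul, LinearMap.add_apply, LinearMap.smul_apply,
        toEuclideanLin_eigvec hA a, smul_smul, Complex.ofReal_mul])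
    hC
  choose σ hσ using fun i => hfwd i
  choose τ hτ using fun a => hbwd a
  -- σ is injective
  have hστ : ∀ a, σ (τ a) = a := by
    intro a
    by_contra h
    have h1 := hσ (τ a)
    have h2 := hτ a
    have h3 := hsep (σ (τ a)) a h
    have h4 : |Λ * E (σ (τ a)) - Λ * E a| ≤ 2 * C := by
      have h1' := abs_le.mp h1
      have h2' := abs_le.mp h2
      rw [abs_le]
      constructor <;> linarith
    rw [← mul_sub, abs_mul, abs_of_pos hΛpos] at h4
    nlinarith [abs_nonneg (E (σ (τ a)) - E a)]
  have hσinj : Function.Injective σ :=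
    Finite.injective_iff_surjective.mpr fun a => ⟨τ a, hστ a⟩
  -- prove the gaps condition
  intro j k j' k' hjk heq
  set μ := hAB.eigenvalues with hμ
  have b1 := hσ j; have b2 := hσ k; have b3 := hσ j'; have b4 := hσ k'
  have hgap : |(E (σ j) - E (σ k)) - (E (σ j') - E (σ k'))| < δ := by
    have h4 : |Λ * E (σ j) - Λ * E (σ k) - (Λ * E (σ j') - Λ * E (σ k'))| ≤ 4 * C := by
      rw [abs_le] at b1 b2 b3 b4 ⊢
      constructor <;> linarith
    rw [show Λ * E (σ j) - Λ * E (σ k) - (Λ * E (σ j') - Λ * E (σ k'))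
        = Λ * ((E (σ j) - E (σ k)) - (E (σ j') - E (σ k'))) by ring,
      abs_mul, abs_of_pos hΛpos] at h4
    by_contra h
    push_neg at h
    nlinarith
  have hσjk : σ j ≠ σ k := fun h => hjk (hσinj h)
  have : σ j = σ j' ∧ σ k = σ k' := by
    by_contra h
    exact absurd hgap (not_lt.mpr (hδle (σ j) (σ k) (σ j') (σ k') hσjk h))
  exact ⟨hσinj this.1, hσinj this.2⟩
end
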